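/- Monotonicity of UI under local operations of Alice: if S' is obtained from S by a channel, i.e., (Y,Z) − S − S' is a Markov chain under the joint distribution of (S,S',Y,Z), then UI(S'; Y \ Z) ≤ UI(S; Y \ Z). -/

import Mathlib

open Finset Real

section Defs
variable {α β γ : Type*} [Fintype α] [Fintype β] [Fintype γ]

/-- `p` is a probability distribution on a finite type. -/
def IsDist (p : α → ℝ) : Prop := (∀ a, 0 ≤ p a) ∧ ∑ a, p a = 1

/-- `k` is a channel (stochastic matrix): each row is a distribution. -/
def IsChannel (k : α → β → ℝ) : Prop := ∀ a, IsDist (k a)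

/-- Kullback–Leibler divergence (base 2) between distributions on a finite type. -/
noncomputable def klDiv2 (p q : α → ℝ) : ℝ := ∑ a, p a * Real.logb 2 (p a / q a)

/-- Channel composition: `(chComp lam mu) a c = ∑ b, lam b c * mu a b`. -/
def chComp (lam : β → γ → ℝ) (mu : α → β → ℝ) : α → γ → ℝ :=
  fun a c => ∑ b, lam b c * mu a b

/-- Conditional (weighted) KL divergence `D(k ∥ k' | pi)`. -/
noncomputable def condKL (pi : α → ℝ) (k k' : α → β → ℝ) : ℝ :=
  ∑ a, pi a * klDiv2 (k a) (k' a)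

/-- Weighted output deficiency `δ_o^π(μ,κ) = inf_λ D(κ ∥ λ∘μ | π)`. -/
noncomputable def defOut (pi : α → ℝ) (mu : α → γ → ℝ) (kap : α → β → ℝ) : ℝ :=
  sInf {d | ∃ lam : γ → β → ℝ, IsChannel lam ∧ d = condKL pi kap (chComp lam mu)}

/-- Risk of a fixed strategy `rho` used after observing through channel `nu`. -/
noncomputable def riskWith {S O A : Type*} [Fintype S] [Fintype O] [Fintype A]
    (pi : S → ℝ) (nu : S → O → ℝ) (rho : O → A → ℝ) (l : S → A → ℝ) : ℝ :=
  ∑ s, pi s * ∑ a, chComp rho nu s a * l s a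

/-- Optimal Bayes risk `R(π,ν,ℓ)`. -/
noncomputable def bayesRisk {S O A : Type*} [Fintype S] [Fintype O] [Fintype A]
    (pi : S → ℝ) (nu : S → O → ℝ) (l : S → A → ℝ) : ℝ :=
  sInf {r | ∃ rho : O → A → ℝ, IsChannel rho ∧ r = riskWith pi nu rho l}

/-- Total variation distance between distributions on a finite type. -/
noncomputable def tvDist (p q : α → ℝ) : ℝ := (∑ a, |p a - q a|) / 2

end Defs

section Joint
variable {S Y Z : Type*} [Fintype S] [Fintype Y] [Fintype Z]

noncomputable def margSY (P : S × Y × Z → ℝ) : S × Y → ℝ := fun p => ∑ z, P (p.1, p.2, z)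
noncomputable def margSZ (P : S × Y × Z → ℝ) : S × Z → ℝ := fun p => ∑ y, P (p.1, y, p.2)
noncomputable def margYZ (P : S × Y × Z → ℝ) : Y × Z → ℝ := fun p => ∑ s, P (s, p.1, p.2)
noncomputable def margS (P : S × Y × Z → ℝ) : S → ℝ := fun s => ∑ y, ∑ z, P (s, y, z)
noncomputable def margY (P : S × Y × Z → ℝ) : Y → ℝ := fun y => ∑ s, ∑ z, P (s, y, z)
noncomputable def margZ (P : S × Y × Z → ℝ) : Z → ℝ := fun z => ∑ s, ∑ y, P (s, y, z)

/-- Mutual information `I(S;Y)` (base 2) of the (S,Y)-marginal of `P`. -/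
noncomputable def miSY (P : S × Y × Z → ℝ) : ℝ :=
  ∑ s, ∑ y, margSY P (s, y) * Real.logb 2 (margSY P (s, y) / (margS P s * margY P y))

/-- Mutual information `I(S;Z)` (base 2) of the (S,Z)-marginal of `P`. -/
noncomputable def miSZ (P : S × Y × Z → ℝ) : ℝ :=
  ∑ s, ∑ z, margSZ P (s, z) * Real.logb 2 (margSZ P (s, z) / (margS P s * margZ P z))

/-- Conditional mutual information `I(S;Y|Z)` (base 2) under `P`. -/
noncomputable def condMI (P : S × Y × Z → ℝ) : ℝ :=
  ∑ s, ∑ y, ∑ z,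
    P (s, y, z) * Real.logb 2 (P (s, y, z) * margZ P z / (margSZ P (s, z) * margYZ P (y, z)))

/-- The feasible set `Δ_P`: joint distributions with the same (S,Y)- and (S,Z)-marginals as `P`. -/
def marginalPolytope (P : S × Y × Z → ℝ) : Set (S × Y × Z → ℝ) :=
  {Q | IsDist Q ∧ margSY Q = margSY P ∧ margSZ Q = margSZ P}

/-- Minimum-synergy unique information `UI(S;Y\Z) = inf_{Q ∈ Δ_P} I_Q(S;Y|Z)`. -/
noncomputable def UI (P : S × Y × Z → ℝ) : ℝ :=
  sInf (condMI '' marginalPolytope P)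

noncomputable def condYgivenS (P : S × Y × Z → ℝ) : S → Y → ℝ :=
  fun s y => margSY P (s, y) / margS P s
noncomputable def condZgivenS (P : S × Y × Z → ℝ) : S → Z → ℝ :=
  fun s z => margSZ P (s, z) / margS P s
noncomputable def condSgivenY (P : S × Y × Z → ℝ) : Y → S → ℝ :=
  fun y s => margSY P (s, y) / margY P y
noncomputable def condSgivenZ (P : S × Y × Z → ℝ) : Z → S → ℝ :=
  fun z s => margSZ P (s, z) / margZ P z

/-- Weighted input deficiency `δ_i^π(μ̄,κ̄) = inf_{λ̄} ∑_y π_Y(y) D(κ̄_y ∥ (μ̄∘λ̄)_y)`. -/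
noncomputable def defIn {Y' Z' S' : Type*} [Fintype Y'] [Fintype Z'] [Fintype S']
    (piY : Y' → ℝ) (mub : Z' → S' → ℝ) (kab : Y' → S' → ℝ) : ℝ :=
  sInf {d | ∃ lb : Y' → Z' → ℝ, IsChannel lb ∧
    d = ∑ y, piY y * klDiv2 (kab y) (chComp mub lb y)}

end Joint

namespace UIaux
open Finset Real

lemma log2_pos : (0:ℝ) < Real.log 2 := Real.log_pos one_lt_two

/-- Gibbs / log-sum inequality for subnormalized `q`. -/
lemma gibbs {ι : Type*} [Fintype ι] (p q : ι → ℝ) (hp : ∀ i, 0 ≤ p i)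
    (hq : ∀ i, 0 ≤ q i) (hpq : ∀ i, 0 < p i → 0 < q i)
    (hsum : ∑ i, q i ≤ ∑ i, p i) :
    0 ≤ ∑ i, p i * Real.logb 2 (p i / q i) := by
  have key : ∀ i, (p i - q i) / Real.log 2 ≤ p i * Real.logb 2 (p i / q i) := by
    intro i
    rcases (hp i).eq_or_lt with h | h
    · rw [← h]
      simp only [zero_mul, zero_sub]
      exact div_nonpos_of_nonpos_of_nonneg (neg_nonpos_of_nonneg (hq i)) log2_pos.le
    · have hqi := hpq i h
      have h1 : Real.log (q i) - Real.log (p i) ≤ q i / p i - 1 := by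
        have := Real.log_le_sub_one_of_pos (div_pos hqi h)
        rwa [Real.log_div (ne_of_gt hqi) (ne_of_gt h)] at this
      have h4 : p i - q i ≤ p i * Real.log (p i / q i) := by
        rw [Real.log_div (ne_of_gt h) (ne_of_gt hqi)]
        have h2 : 1 - q i / p i ≤ Real.log (p i) - Real.log (q i) := by linarith
        have h3 := mul_le_mul_of_nonneg_left h2 h.le
        have hpne : p i ≠ 0 := ne_of_gt h
        calc p i - q i = p i * (1 - q i / p i) := by field_simp
          _ ≤ _ := h3
      calc (p i - q i) / Real.log 2 ≤ p i * Real.log (p i / q i) / Real.log 2 :=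
            (div_le_div_iff_of_pos_right log2_pos).mpr h4
        _ = p i * Real.logb 2 (p i / q i) := by rw [Real.logb]; ring
  calc (0:ℝ) ≤ (∑ i, p i - ∑ i, q i) / Real.log 2 :=
        div_nonneg (sub_nonneg.mpr hsum) log2_pos.le
    _ = ∑ i, (p i - q i) / Real.log 2 := by
        rw [← Finset.sum_sub_distrib, Finset.sum_div]
    _ ≤ ∑ i, p i * Real.logb 2 (p i / q i) := Finset.sum_le_sum fun i _ => key i

end UIaux

set_option linter.unusedSectionVars false
namespace UIaux
open Finset Real

variable {S S' Y Z : Type*} [Fintype S] [Fintype S'] [Fintype Y] [Fintype Z]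

/-- Push the S-component of a joint distribution through a channel. -/
noncomputable def push (k : S → S' → ℝ) (Q : S × Y × Z → ℝ) : S' × Y × Z → ℝ :=
  fun p => ∑ s, Q (s, p.2.1, p.2.2) * k s p.1

lemma sum_swap_41 {α β γ δ : Type*} [Fintype α] [Fintype β] [Fintype γ] [Fintype δ]
    (f : α → β → γ → δ → ℝ) :
    ∑ a, ∑ b, ∑ c, ∑ d, f a b c d = ∑ b, ∑ c, ∑ d, ∑ a, f a b c d := by
  rw [Finset.sum_comm]
  refine Finset.sum_congr rfl fun b _ => ?_
  rw [Finset.sum_comm]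
  exact Finset.sum_congr rfl fun c _ => Finset.sum_comm

lemma collapse (k : S → S' → ℝ) (hk : IsChannel k) (s : S) (h : Y → Z → ℝ) :
    ∑ s' : S', ∑ y, ∑ z, h y z * k s s' = ∑ y, ∑ z, h y z := by
  rw [Finset.sum_comm]
  refine Finset.sum_congr rfl fun y _ => ?_
  rw [Finset.sum_comm]
  refine Finset.sum_congr rfl fun z _ => ?_
  rw [← Finset.mul_sum, (hk s).2, mul_one]

lemma le_margSZ (Q : S × Y × Z → ℝ) (hQ0 : ∀ x, 0 ≤ Q x) (s : S) (y : Y) (z : Z) :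
    Q (s, y, z) ≤ margSZ Q (s, z) := by
  unfold margSZ
  exact Finset.single_le_sum (fun y' _ => hQ0 (s, y', z)) (Finset.mem_univ y)

lemma le_margYZ (Q : S × Y × Z → ℝ) (hQ0 : ∀ x, 0 ≤ Q x) (s : S) (y : Y) (z : Z) :
    Q (s, y, z) ≤ margYZ Q (y, z) := by
  unfold margYZ
  exact Finset.single_le_sum (fun s' _ => hQ0 (s', y, z)) (Finset.mem_univ s)

lemma le_margZ (Q : S × Y × Z → ℝ) (hQ0 : ∀ x, 0 ≤ Q x) (s : S) (y : Y) (z : Z) :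
    Q (s, y, z) ≤ margZ Q z := by
  unfold margZ
  calc Q (s, y, z) ≤ ∑ y', Q (s, y', z) :=
        Finset.single_le_sum (fun y' _ => hQ0 (s, y', z)) (Finset.mem_univ y)
    _ ≤ ∑ s', ∑ y', Q (s', y', z) :=
        Finset.single_le_sum (fun s' _ => Finset.sum_nonneg fun y' _ => hQ0 (s', y', z))
          (Finset.mem_univ s)

lemma margYZ_push (k : S → S' → ℝ) (Q : S × Y × Z → ℝ) (hk : IsChannel k) :
    margYZ (push k Q) = margYZ Q := by
  funext p
  show (∑ s' : S', ∑ s, Q (s, p.1, p.2) * k s s') = ∑ s, Q (s, p.1, p.2)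
  rw [Finset.sum_comm]
  exact Finset.sum_congr rfl fun s _ => by rw [← Finset.mul_sum, (hk s).2, mul_one]

lemma margZ_push (k : S → S' → ℝ) (Q : S × Y × Z → ℝ) (hk : IsChannel k) :
    margZ (push k Q) = margZ Q := by
  funext z
  show (∑ s' : S', ∑ y, ∑ s, Q (s, y, z) * k s s') = ∑ s, ∑ y, Q (s, y, z)
  have h1 : ∀ y : Y, (∑ s' : S', ∑ s, Q (s, y, z) * k s s') = ∑ s, Q (s, y, z) := by
    intro y
    rw [Finset.sum_comm]
    exact Finset.sum_congr rfl fun s _ => by rw [← Finset.mul_sum, (hk s).2, mul_one]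
  calc (∑ s' : S', ∑ y, ∑ s, Q (s, y, z) * k s s')
      = ∑ y, ∑ s' : S', ∑ s, Q (s, y, z) * k s s' := Finset.sum_comm
    _ = ∑ y, ∑ s, Q (s, y, z) := Finset.sum_congr rfl fun y _ => h1 y
    _ = ∑ s, ∑ y, Q (s, y, z) := Finset.sum_comm

lemma margSY_push (k : S → S' → ℝ) (Q : S × Y × Z → ℝ) :
    margSY (push k Q) = fun p => ∑ s, margSY Q (s, p.2) * k s p.1 := by
  funext p
  show (∑ z, ∑ s, Q (s, p.2, z) * k s p.1) = ∑ s, (∑ z, Q (s, p.2, z)) * k s p.1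
  rw [Finset.sum_comm]
  exact Finset.sum_congr rfl fun s _ => (Finset.sum_mul _ _ _).symm

lemma margSZ_push (k : S → S' → ℝ) (Q : S × Y × Z → ℝ) :
    margSZ (push k Q) = fun p => ∑ s, margSZ Q (s, p.2) * k s p.1 := by
  funext p
  show (∑ y, ∑ s, Q (s, y, p.2) * k s p.1) = ∑ s, (∑ y, Q (s, y, p.2)) * k s p.1
  rw [Finset.sum_comm]
  exact Finset.sum_congr rfl fun s _ => (Finset.sum_mul _ _ _).symm

lemma isDist_push (k : S → S' → ℝ) (Q : S × Y × Z → ℝ) (hk : IsChannel k)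
    (hQ : IsDist Q) : IsDist (push k Q) := by
  obtain ⟨hQ0, hQ1⟩ := hQ
  constructor
  · exact fun x => Finset.sum_nonneg fun s _ => mul_nonneg (hQ0 _) ((hk s).1 _)
  · have h1 : ∑ x : S' × Y × Z, push k Q x
        = ∑ s' : S', ∑ y, ∑ z, ∑ s, Q (s, y, z) * k s s' := by
      simp [Fintype.sum_prod_type, push]
    have h2 : ∑ x : S × Y × Z, Q x = ∑ s, ∑ y, ∑ z, Q (s, y, z) := by
      simp [Fintype.sum_prod_type]
    rw [h1, ← sum_swap_41 fun s s' y z => Q (s, y, z) * k s s']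
    rw [h2] at hQ1
    rw [← hQ1]
    exact Finset.sum_congr rfl fun s _ => collapse k hk s _

end UIaux

set_option linter.unusedSectionVars false
namespace UIaux
section Main
variable {S S' Y Z : Type*} [Fintype S] [Fintype S'] [Fintype Y] [Fintype Z]

lemma sum3_rot {α β γ : Type*} [Fintype α] [Fintype β] [Fintype γ] (f : α → β → γ → ℝ) :
    ∑ a, ∑ b, ∑ c, f a b c = ∑ c, ∑ a, ∑ b, f a b c := by
  have h : ∀ a : α, ∑ b, ∑ c, f a b c = ∑ c, ∑ b, f a b c := fun a => Finset.sum_comm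
  simp_rw [h]
  exact Finset.sum_comm

lemma condMI_nonneg (Q : S × Y × Z → ℝ) (hQ : IsDist Q) : 0 ≤ condMI Q := by
  obtain ⟨hQ0, hQ1⟩ := hQ
  have hmsz0 : ∀ s z, 0 ≤ margSZ Q (s, z) := fun s z => Finset.sum_nonneg fun y _ => hQ0 _
  have hmyz0 : ∀ y z, 0 ≤ margYZ Q (y, z) := fun y z => Finset.sum_nonneg fun s _ => hQ0 _
  have hmz0 : ∀ z, 0 ≤ margZ Q z :=
    fun z => Finset.sum_nonneg fun s _ => Finset.sum_nonneg fun y _ => hQ0 _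
  have hg := gibbs (ι := S × Y × Z) Q
    (fun x => margSZ Q (x.1, x.2.2) * margYZ Q x.2 / margZ Q x.2.2)
    hQ0
    (fun x => div_nonneg (mul_nonneg (hmsz0 _ _) (hmyz0 _ _)) (hmz0 _))
    (fun x hx => div_pos
      (mul_pos (lt_of_lt_of_le hx (le_margSZ Q hQ0 x.1 x.2.1 x.2.2))
        (lt_of_lt_of_le hx (le_margYZ Q hQ0 x.1 x.2.1 x.2.2)))
      (lt_of_lt_of_le hx (le_margZ Q hQ0 x.1 x.2.1 x.2.2)))
    ?_
  · -- transfer gibbs bound to condMI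
    have e1 : ∑ x : S × Y × Z, Q x *
        Real.logb 2 (Q x / (margSZ Q (x.1, x.2.2) * margYZ Q x.2 / margZ Q x.2.2))
        = condMI Q := by
      unfold condMI
      rw [Fintype.sum_prod_type]
      refine Finset.sum_congr rfl fun s _ => ?_
      rw [Fintype.sum_prod_type]
      refine Finset.sum_congr rfl fun y _ => ?_
      refine Finset.sum_congr rfl fun z _ => ?_
      rcases (hQ0 (s, y, z)).eq_or_lt with h | h
      · rw [← h]; simp
      · congr 1
        have h1 : 0 < margSZ Q (s, z) := lt_of_lt_of_le h (le_margSZ Q hQ0 s y z)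
        have h2 : 0 < margYZ Q (y, z) := lt_of_lt_of_le h (le_margYZ Q hQ0 s y z)
        have h3 : 0 < margZ Q z := lt_of_lt_of_le h (le_margZ Q hQ0 s y z)
        have h1' := h1.ne'
        have h2' := h2.ne'
        have h3' := h3.ne'
        congr 1
        field_simp
    rw [e1] at hg
    exact hg
  · -- sum of q bounded by 1
    have e2 : ∑ x : S × Y × Z,
        margSZ Q (x.1, x.2.2) * margYZ Q x.2 / margZ Q x.2.2
        = ∑ z, ∑ s, ∑ y, margSZ Q (s, z) * margYZ Q (y, z) / margZ Q z := by
      rw [← sum3_rot fun s y z => margSZ Q (s, z) * margYZ Q (y, z) / margZ Q z]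
      simp [Fintype.sum_prod_type]
    have e3 : ∑ x : S × Y × Z, Q x = ∑ z, ∑ s, ∑ y, Q (s, y, z) := by
      rw [← sum3_rot fun s y z => Q (s, y, z)]
      simp [Fintype.sum_prod_type]
    rw [e2, e3]
    refine Finset.sum_le_sum fun z _ => ?_
    have hA : ∑ s, margSZ Q (s, z) = margZ Q z := rfl
    have hB : ∑ y, margYZ Q (y, z) = margZ Q z := Finset.sum_comm
    calc ∑ s, ∑ y, margSZ Q (s, z) * margYZ Q (y, z) / margZ Q z
        = (∑ s, margSZ Q (s, z)) * ((∑ y, margYZ Q (y, z)) / margZ Q z) := by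
          rw [Finset.sum_mul]
          refine Finset.sum_congr rfl fun s _ => ?_
          rw [Finset.sum_div, Finset.mul_sum]
          exact Finset.sum_congr rfl fun y _ => mul_div_assoc _ _ _
      _ ≤ margZ Q z := by
          rw [hA, hB]
          calc margZ Q z * (margZ Q z / margZ Q z) ≤ margZ Q z * 1 :=
                mul_le_mul_of_nonneg_left (div_self_le_one _) (hmz0 z)
            _ = margZ Q z := mul_one _
      _ = ∑ s, ∑ y, Q (s, y, z) := rfl

end Main
end UIaux

set_option linter.unusedSectionVars false
set_option maxHeartbeats 1000000
namespace UIaux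
section DPI
variable {S S' Y Z : Type*} [Fintype S] [Fintype S'] [Fintype Y] [Fintype Z]

lemma condMI_push_le (k : S → S' → ℝ) (Q : S × Y × Z → ℝ)
    (hk : IsChannel k) (hQ : IsDist Q) :
    condMI (push k Q) ≤ condMI Q := by
  obtain ⟨hQ0, hQ1⟩ := hQ
  have hk0 : ∀ s s', 0 ≤ k s s' := fun s s' => (hk s).1 s'
  set Q' : S' × Y × Z → ℝ := push k Q with hQ'def
  have hQ'0 : ∀ x, 0 ≤ Q' x :=
    fun x => Finset.sum_nonneg fun s _ => mul_nonneg (hQ0 _) (hk0 _ _)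
  have hmz : margZ Q' = margZ Q := margZ_push k Q hk
  have hmyz : margYZ Q' = margYZ Q := margYZ_push k Q hk
  have hmsz0 : ∀ s z, 0 ≤ margSZ Q (s, z) := fun s z => Finset.sum_nonneg fun y _ => hQ0 _
  have hmsz'0 : ∀ s' z, 0 ≤ margSZ Q' (s', z) := fun s' z => Finset.sum_nonneg fun y _ => hQ'0 _
  -- termwise identity
  have key : ∀ s s' y z,
      (Q (s, y, z) * k s s') * Real.logb 2 ((Q (s, y, z) * k s s') /
          (margSZ Q (s, z) * k s s' * (Q' (s', y, z) / margSZ Q' (s', z))))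
      = (Q (s, y, z) * Real.logb 2
            (Q (s, y, z) * margZ Q z / (margSZ Q (s, z) * margYZ Q (y, z)))) * k s s'
        - (Q (s, y, z) * k s s') * Real.logb 2
            (Q' (s', y, z) * margZ Q z / (margSZ Q' (s', z) * margYZ Q (y, z))) := by
    intro s s' y z
    rcases (hQ0 (s, y, z)).eq_or_lt with h0 | hQp
    · rw [← h0]; simp
    rcases (hk0 s s').eq_or_lt with h0 | hkp
    · rw [← h0]; simp
    have hmSZ : 0 < margSZ Q (s, z) := lt_of_lt_of_le hQp (le_margSZ Q hQ0 s y z)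
    have hmYZ : 0 < margYZ Q (y, z) := lt_of_lt_of_le hQp (le_margYZ Q hQ0 s y z)
    have hmZ : 0 < margZ Q z := lt_of_lt_of_le hQp (le_margZ Q hQ0 s y z)
    have hQ'p : 0 < Q' (s', y, z) := by
      rw [hQ'def]
      refine lt_of_lt_of_le (mul_pos hQp hkp) ?_
      show Q (s, y, z) * k s s' ≤ ∑ t, Q (t, y, z) * k t s'
      exact Finset.single_le_sum (f := fun t => Q (t, y, z) * k t s') (fun t _ => mul_nonneg (hQ0 _) (hk0 _ _)) (Finset.mem_univ s)
    have hmSZ' : 0 < margSZ Q' (s', z) := lt_of_lt_of_le hQ'p (le_margSZ Q' hQ'0 s' y z)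
    have e1 : (Q (s, y, z) * k s s') /
        (margSZ Q (s, z) * k s s' * (Q' (s', y, z) / margSZ Q' (s', z)))
        = (Q (s, y, z) * margZ Q z / (margSZ Q (s, z) * margYZ Q (y, z)))
          / (Q' (s', y, z) * margZ Q z / (margSZ Q' (s', z) * margYZ Q (y, z))) := by
      have a1 := hmSZ.ne'
      have a2 := hmYZ.ne'
      have a3 := hmZ.ne'
      have a4 := hQ'p.ne'
      have a5 := hmSZ'.ne'
      have a6 := hkp.ne'
      field_simp
    rw [e1, Real.logb_div
      (ne_of_gt (div_pos (mul_pos hQp hmZ) (mul_pos hmSZ hmYZ)))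
      (ne_of_gt (div_pos (mul_pos hQ'p hmZ) (mul_pos hmSZ' hmYZ)))]
    ring
  -- condMI Q as a quadruple sum
  have eqA : condMI Q = ∑ s, ∑ s', ∑ y, ∑ z,
      (Q (s, y, z) * Real.logb 2
        (Q (s, y, z) * margZ Q z / (margSZ Q (s, z) * margYZ Q (y, z)))) * k s s' := by
    unfold condMI
    exact Finset.sum_congr rfl fun s _ => (collapse k hk s _).symm
  -- condMI Q' as a quadruple sum
  have eqB : condMI Q' = ∑ s, ∑ s', ∑ y, ∑ z,
      (Q (s, y, z) * k s s') * Real.logb 2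
        (Q' (s', y, z) * margZ Q z / (margSZ Q' (s', z) * margYZ Q (y, z))) := by
    unfold condMI
    rw [hmz, hmyz]
    have hsplit : ∀ s' y z, Q' (s', y, z) * Real.logb 2
        (Q' (s', y, z) * margZ Q z / (margSZ Q' (s', z) * margYZ Q (y, z)))
        = ∑ s, (Q (s, y, z) * k s s') * Real.logb 2
            (Q' (s', y, z) * margZ Q z / (margSZ Q' (s', z) * margYZ Q (y, z))) := by
      intro s' y z
      rw [← Finset.sum_mul]
      rfl
    simp_rw [hsplit]
    exact (sum_swap_41 fun s s' y z => (Q (s, y, z) * k s s') * Real.logb 2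
      (Q' (s', y, z) * margZ Q z / (margSZ Q' (s', z) * margYZ Q (y, z)))).symm
  -- Gibbs bound
  have hg : 0 ≤ ∑ s, ∑ s', ∑ y, ∑ z, (Q (s, y, z) * k s s') *
      Real.logb 2 ((Q (s, y, z) * k s s') /
        (margSZ Q (s, z) * k s s' * (Q' (s', y, z) / margSZ Q' (s', z)))) := by
    have hgib := gibbs (ι := S × S' × Y × Z)
      (fun x => Q (x.1, x.2.2) * k x.1 x.2.1)
      (fun x => margSZ Q (x.1, x.2.2.2) * k x.1 x.2.1 *
        (Q' (x.2.1, x.2.2) / margSZ Q' (x.2.1, x.2.2.2)))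
      (fun x => mul_nonneg (hQ0 _) (hk0 _ _))
      (fun x => mul_nonneg (mul_nonneg (hmsz0 _ _) (hk0 _ _))
        (div_nonneg (hQ'0 _) (hmsz'0 _ _)))
      ?_ ?_
    · refine le_of_le_of_eq hgib ?_
      simp [Fintype.sum_prod_type]
    · rintro ⟨s, s', y, z⟩ hx
      dsimp only at hx ⊢
      have hQp : 0 < Q (s, y, z) := by
        rcases (hQ0 (s, y, z)).eq_or_lt with h0 | h
        · exfalso; rw [← h0, zero_mul] at hx; exact lt_irrefl 0 hx
        · exact h
      have hkp : 0 < k s s' := by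
        rcases (hk0 s s').eq_or_lt with h0 | h
        · exfalso; rw [← h0, mul_zero] at hx; exact lt_irrefl 0 hx
        · exact h
      have hQ'p : 0 < Q' (s', y, z) := by
        rw [hQ'def]
        refine lt_of_lt_of_le (mul_pos hQp hkp) ?_
        show Q (s, y, z) * k s s' ≤ ∑ t, Q (t, y, z) * k t s'
        exact Finset.single_le_sum (f := fun t => Q (t, y, z) * k t s') (fun t _ => mul_nonneg (hQ0 _) (hk0 _ _)) (Finset.mem_univ s)
      exact mul_pos (mul_pos (lt_of_lt_of_le hQp (le_margSZ Q hQ0 s y z)) hkp)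
        (div_pos hQ'p (lt_of_lt_of_le hQ'p (le_margSZ Q' hQ'0 s' y z)))
    · -- sum of q ≤ sum of p
      have ep : ∑ x : S × S' × Y × Z, Q (x.1, x.2.2) * k x.1 x.2.1 = 1 := by
        have : ∑ x : S × S' × Y × Z, Q (x.1, x.2.2) * k x.1 x.2.1
            = ∑ s, ∑ s', ∑ y, ∑ z, Q (s, y, z) * k s s' := by
          simp [Fintype.sum_prod_type]
        rw [this]
        have h2 : ∀ s : S, ∑ s' : S', ∑ y, ∑ z, Q (s, y, z) * k s s'
            = ∑ y, ∑ z, Q (s, y, z) := fun s => collapse k hk s _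
        simp_rw [h2]
        have h3 : ∑ x : S × Y × Z, Q x = ∑ s, ∑ y, ∑ z, Q (s, y, z) := by
          simp [Fintype.sum_prod_type]
        rw [← h3]; exact hQ1
      have eq : ∑ x : S × S' × Y × Z, margSZ Q (x.1, x.2.2.2) * k x.1 x.2.1 *
          (Q' (x.2.1, x.2.2) / margSZ Q' (x.2.1, x.2.2.2))
          = ∑ s, ∑ s', ∑ y, ∑ z, margSZ Q (s, z) * k s s' *
            (Q' (s', y, z) / margSZ Q' (s', z)) := by
        simp [Fintype.sum_prod_type]
      rw [ep, eq]
      have step1 : ∀ s s', ∑ y, ∑ z, margSZ Q (s, z) * k s s' *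
          (Q' (s', y, z) / margSZ Q' (s', z)) ≤ ∑ z, margSZ Q (s, z) * k s s' := by
        intro s s'
        rw [Finset.sum_comm]
        refine Finset.sum_le_sum fun z _ => ?_
        have : ∑ y, margSZ Q (s, z) * k s s' * (Q' (s', y, z) / margSZ Q' (s', z))
            = margSZ Q (s, z) * k s s' * (margSZ Q' (s', z) / margSZ Q' (s', z)) := by
          rw [← Finset.mul_sum, ← Finset.sum_div]
          rfl
        rw [this]
        calc margSZ Q (s, z) * k s s' * (margSZ Q' (s', z) / margSZ Q' (s', z))
            ≤ margSZ Q (s, z) * k s s' * 1 :=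
              mul_le_mul_of_nonneg_left (div_self_le_one _)
                (mul_nonneg (hmsz0 s z) (hk0 s s'))
          _ = margSZ Q (s, z) * k s s' := mul_one _
      calc ∑ s, ∑ s', ∑ y, ∑ z, margSZ Q (s, z) * k s s' *
            (Q' (s', y, z) / margSZ Q' (s', z))
          ≤ ∑ s, ∑ s', ∑ z, margSZ Q (s, z) * k s s' :=
            Finset.sum_le_sum fun s _ => Finset.sum_le_sum fun s' _ => step1 s s'
        _ = 1 := by
            have h4 : ∀ s : S, ∑ s' : S', ∑ z, margSZ Q (s, z) * k s s'
                = ∑ z, margSZ Q (s, z) := by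
              intro s
              rw [Finset.sum_comm]
              refine Finset.sum_congr rfl fun z _ => ?_
              rw [← Finset.mul_sum, (hk s).2, mul_one]
            simp_rw [h4]
            have h5 : ∀ s : S, ∑ z, margSZ Q (s, z) = ∑ y, ∑ z, Q (s, y, z) :=
              fun s => Finset.sum_comm
            simp_rw [h5]
            have h6 : ∑ x : S × Y × Z, Q x = ∑ s, ∑ y, ∑ z, Q (s, y, z) := by
              simp [Fintype.sum_prod_type]
            rw [← h6]; exact hQ1
  simp_rw [key] at hg
  simp only [Finset.sum_sub_distrib] at hg
  linarith [eqA, eqB]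

end DPI
end UIaux


/-- monotonicity of `UI` under local operations of Alice: if `S'` is
obtained from `S` via the channel `k` (so `(Y,Z) − S − S'` is a Markov chain), then
`UI(S';Y\Z) ≤ UI(S;Y\Z)`. -/
theorem UI_mono_local_operation
    {S S' Y Z : Type*} [Fintype S] [Fintype S'] [Fintype Y] [Fintype Z]
    (P : S × Y × Z → ℝ) (hP : IsDist P)
    (k : S → S' → ℝ) (hk : IsChannel k) :
    UI (fun p : S' × Y × Z => ∑ s, P (s, p.2.1, p.2.2) * k s p.1) ≤ UI P := by
  have hPeq : (fun p : S' × Y × Z => ∑ s, P (s, p.2.1, p.2.2) * k s p.1) = UIaux.push k P :=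
    rfl
  rw [hPeq]
  unfold UI
  have hbdd : BddBelow (condMI '' marginalPolytope (UIaux.push k P)) := by
    refine ⟨0, ?_⟩
    rintro r ⟨R, ⟨hR, _, _⟩, rfl⟩
    exact UIaux.condMI_nonneg R hR
  refine le_csInf ⟨condMI P, ⟨P, ⟨hP, rfl, rfl⟩, rfl⟩⟩ ?_
  rintro b ⟨Q, ⟨hQd, hQsy, hQsz⟩, rfl⟩
  have hmem : UIaux.push k Q ∈ marginalPolytope (UIaux.push k P) := by
    refine ⟨UIaux.isDist_push k Q hk hQd, ?_, ?_⟩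
    · rw [UIaux.margSY_push, UIaux.margSY_push, hQsy]
    · rw [UIaux.margSZ_push, UIaux.margSZ_push, hQsz]
  calc sInf (condMI '' marginalPolytope (UIaux.push k P))
      ≤ condMI (UIaux.push k Q) := csInf_le hbdd ⟨UIaux.push k Q, hmem, rfl⟩
    _ ≤ condMI Q := UIaux.condMI_push_le k Q hk hQd
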